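/- arXiv:math/0605201 — 4 statements merged into one kernel-verified Lean document; each statement's English description precedes it below -/
import Mathlib

section
/- Let t be a real number with t ≥ −1/12 and t ≠ 0. Then ∫_{−c_t}^{c_t} (t/(2π))·(x² − D_t)·√(c_t² − x²) dx = 1; that is, the equilibrium density of the external field V_t integrates to one over [−c_t, c_t]. -/
open MeasureTheory

noncomputable section

/-- The endpoint `c_t = √((2/(3t))(√(1+12t) − 1))` of the support of the equilibrium measure. -/
def cT (t : ℝ) : ℝ := Real.sqrt ((2 / (3 * t)) * (Real.sqrt (1 + 12 * t) - 1))

/-- The constant `D_t = −(1/(3t))(√(1+12t) + 2)` (denoted `d_t²` in the paper). -/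
def DT (t : ℝ) : ℝ := -(1 / (3 * t)) * (Real.sqrt (1 + 12 * t) + 2)

/-- The equilibrium density `(t/2π)(x² − D_t)√(c_t² − x²)`. -/
def eqDensity (t : ℝ) (x : ℝ) : ℝ :=
  (t / (2 * Real.pi)) * (x ^ 2 - DT t) * Real.sqrt ((cT t) ^ 2 - x ^ 2)

end

open Real intervalIntegral in
/-- For `t ≥ -1/12`, `t ≠ 0`, the equilibrium density of the external field
`V_t` integrates to one over `[-c_t, c_t]`. -/
theorem stmt6 (t : ℝ) (ht : -1/12 ≤ t) (ht0 : t ≠ 0) :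
    ∫ x in (-(cT t))..(cT t), eqDensity t x = 1 := by
  set c := cT t with hc
  set D := DT t with hD
  set u := Real.sqrt (1 + 12 * t) with hu
  have hu0 : (0:ℝ) ≤ 1 + 12 * t := by linarith
  have hu2 : u ^ 2 = 1 + 12 * t := Real.sq_sqrt hu0
  have hunn : 0 ≤ u := Real.sqrt_nonneg _
  -- the quantity under the square root in cT is nonnegative
  have harg : 0 ≤ (2 / (3 * t)) * (u - 1) := by
    rcases lt_or_gt_of_ne ht0 with htneg | htpos
    · have hu1 : u ≤ 1 := by nlinarith
      have : 2 / (3 * t) ≤ 0 := by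
        apply div_nonpos_of_nonneg_of_nonpos <;> nlinarith
      nlinarith
    · have hu1 : 1 ≤ u := by nlinarith
      have : 0 ≤ 2 / (3 * t) := by positivity
      nlinarith
  have hc2 : c ^ 2 = (2 / (3 * t)) * (u - 1) := Real.sq_sqrt harg
  have hcnn : 0 ≤ c := Real.sqrt_nonneg _
  -- substitution x = c sin θ
  have hsub : (∫ x in (-c)..c, eqDensity t x)
      = ∫ θ in (-(π/2))..(π/2), eqDensity t (c * Real.sin θ) * (c * Real.cos θ) := by
    have := integral_comp_mul_deriv (a := -(π/2)) (b := π/2)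
      (f := fun θ => c * Real.sin θ) (f' := fun θ => c * Real.cos θ)
      (g := eqDensity t)
      (fun x _ => (Real.hasDerivAt_sin x).const_mul c)
      (by fun_prop)
      (by
        unfold eqDensity
        have : Continuous fun x : ℝ => Real.sqrt (c ^ 2 - x ^ 2) :=
          Real.continuous_sqrt.comp (by fun_prop)
        fun_prop)
    simp only [Function.comp] at this
    rw [Real.sin_neg, Real.sin_pi_div_two, mul_one, mul_neg_one] at this
    exact this.symm
  rw [hsub]
  -- simplify the integrand on [-π/2, π/2]
  have hcongr : (∫ θ in (-(π/2))..(π/2), eqDensity t (c * Real.sin θ) * (c * Real.cos θ))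
      = ∫ θ in (-(π/2))..(π/2),
          (t / (2 * π)) * (c^4 * (Real.sin θ ^ 2 * Real.cos θ ^ 2) - D * c^2 * Real.cos θ ^ 2) := by
    apply intervalIntegral.integral_congr
    intro θ hθ
    have hθ' : θ ∈ Set.Icc (-(π/2)) (π/2) := by
      rwa [Set.uIcc_of_le (by linarith [Real.pi_pos])] at hθ
    have hcos : 0 ≤ Real.cos θ := Real.cos_nonneg_of_mem_Icc hθ'
    have hsqrt : Real.sqrt (c ^ 2 - (c * Real.sin θ) ^ 2) = c * Real.cos θ := by
      have : c ^ 2 - (c * Real.sin θ) ^ 2 = (c * Real.cos θ) ^ 2 := by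
        have := Real.sin_sq_add_cos_sq θ
        ring_nf
        nlinarith
      rw [this, Real.sqrt_sq (by positivity)]
    simp only [eqDensity, ← hc, ← hD]
    rw [hsqrt]
    ring
  rw [hcongr]
  rw [intervalIntegral.integral_const_mul]
  have h1 : IntervalIntegrable (fun θ : ℝ => c^4 * (Real.sin θ ^ 2 * Real.cos θ ^ 2))
      volume (-(π/2)) (π/2) := (Continuous.intervalIntegrable (by fun_prop) _ _)
  have h2 : IntervalIntegrable (fun θ : ℝ => D * c^2 * Real.cos θ ^ 2)
      volume (-(π/2)) (π/2) := (Continuous.intervalIntegrable (by fun_prop) _ _)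
  rw [intervalIntegral.integral_sub h1 h2, intervalIntegral.integral_const_mul,
    intervalIntegral.integral_const_mul, integral_sin_sq_mul_cos_sq, integral_cos_sq]
  have hπ : (π:ℝ) ≠ 0 := Real.pi_ne_zero
  have hsin2pi : Real.sin (4 * (π/2)) = 0 := by
    rw [show (4:ℝ) * (π/2) = 2 * π by ring, Real.sin_two_pi]
  have hsin2pi' : Real.sin (4 * (-(π/2))) = 0 := by
    have : 4 * (-(π/2)) = -(2*π) := by ring
    rw [this, Real.sin_neg, Real.sin_two_pi]; ring
  rw [hsin2pi, hsin2pi']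
  simp only [Real.cos_pi_div_two, Real.sin_pi_div_two]
  rw [show (-(π/2) : ℝ) = -(π/2) from rfl]
  rw [Real.cos_neg, Real.sin_neg, Real.cos_pi_div_two, Real.sin_pi_div_two]
  -- now pure algebra
  have hD' : D = -(1 / (3 * t)) * (u + 2) := rfl
  have hc4 : c ^ 4 = ((2 / (3 * t)) * (u - 1)) ^ 2 := by
    rw [show c^4 = (c^2)^2 by ring, hc2]
  have key : t * (c ^ 4 - 4 * D * c ^ 2) = 16 := by
    rw [hD', hc4, hc2]
    have ht3 : (3:ℝ) * t ≠ 0 := by simp [ht0]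
    field_simp
    linear_combination 12 * hu2
  field_simp
  linear_combination (128 * π) * key
end

section
/- Let t be a real number with t ≥ −1/12 and t ≠ 0. Then for every real z > c_t: ∫_{−c_t}^{c_t} [(t/(2π))·(x² − D_t)·√(c_t² − x²)] / (z − x) dx = (z + t·z³)/2 − (t/2)·(z² − D_t)·√(z² − c_t²). In other words, the Stieltjes transform of the equilibrium measure μ_t at z equals V_t'(z)/2 − (t/2)·(z² − D_t)·√(z² − c_t²). -/
open MeasureTheory

set_option maxHeartbeats 1000000 in
/-- For `t ≥ -1/12`, `t ≠ 0` and real `z > c_t`, the Stieltjes transform of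
the equilibrium measure equals `V_t'(z)/2 − (t/2)(z² − D_t)√(z² − c_t²)`. -/
theorem stmt7 (t : ℝ) (ht : -1/12 ≤ t) (ht0 : t ≠ 0) (z : ℝ) (hz : cT t < z) :
    ∫ x in (-(cT t))..(cT t), eqDensity t x / (z - x)
      = (z + t * z ^ 3) / 2 - (t / 2) * (z ^ 2 - DT t) * Real.sqrt (z ^ 2 - (cT t) ^ 2) := by
  have hu0 : (0:ℝ) ≤ 1 + 12 * t := by linarith
  set u : ℝ := Real.sqrt (1 + 12 * t) with hu
  have harg : 0 < (2 / (3 * t)) * (u - 1) := by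
    rcases lt_or_gt_of_ne ht0 with h | h
    · have h1 : u < 1 := by
        have := Real.sqrt_lt_sqrt hu0 (show 1 + 12*t < 1 by linarith)
        simpa using this
      have h2 : 2 / (3 * t) < 0 := div_neg_of_pos_of_neg (by norm_num) (by linarith)
      nlinarith
    · have h1 : 1 < u := by
        rw [hu]
        exact (Real.lt_sqrt (by norm_num)).mpr (by nlinarith)
      have h2 : 0 < 2 / (3 * t) := div_pos (by norm_num) (by linarith)
      nlinarith
  set c : ℝ := cT t with hcdef
  have hc : 0 < c := Real.sqrt_pos.mpr harg
  have hc2 : c ^ 2 = (2 / (3 * t)) * (u - 1) := Real.sq_sqrt harg.le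
  set D : ℝ := DT t with hDdef
  have hD : D = -(1 / (3 * t)) * (u + 2) := rfl
  have hid : t * c ^ 2 / 2 + t * D = -1 := by
    rw [hc2, hD]; field_simp; ring
  have hz0 : 0 < z := lt_trans hc hz
  have hzc2 : 0 < z ^ 2 - c ^ 2 := by nlinarith
  set s : ℝ := Real.sqrt (z ^ 2 - c ^ 2) with hsdef
  have hs : 0 < s := Real.sqrt_pos.mpr hzc2
  have hs2 : s ^ 2 = z ^ 2 - c ^ 2 := Real.sq_sqrt hzc2.le
  set K : ℝ := t / (2 * Real.pi) with hK
  set F : ℝ → ℝ := fun x =>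
    K * ((1/3) * Real.sqrt (c^2 - x^2) ^ 3
      - z * (x/2 * Real.sqrt (c^2 - x^2) + c^2/2 * Real.arcsin (x/c))
      + (z^2 - D) * (z * Real.arcsin (x/c) - Real.sqrt (c^2 - x^2)
          + s * Real.arcsin ((c^2 - z*x)/(c*(z-x))))) with hF
  have hab : -c ≤ c := by linarith
  -- continuity of F on [-c, c]
  have hwcont : ContinuousOn (fun x => (c^2 - z*x)/(c*(z-x))) (Set.Icc (-c) c) := by
    apply ContinuousOn.div (by fun_prop) (by fun_prop)
    intro x hx
    have : x < z := lt_of_le_of_lt hx.2 hz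
    have : z - x ≠ 0 := by linarith
    positivity
  have hconts : Continuous fun x : ℝ => Real.sqrt (c^2 - x^2) := by fun_prop
  have hconta : Continuous fun x : ℝ => Real.arcsin (x/c) :=
    Real.continuous_arcsin.comp (continuous_id.div_const c)
  have hcontF : ContinuousOn F (Set.Icc (-c) c) := by
    apply ContinuousOn.mul continuousOn_const
    apply ContinuousOn.add
    · exact ((continuous_const.mul (hconts.pow 3)).sub (continuous_const.mul
        (((continuous_id.div_const 2).mul hconts).add
          (continuous_const.mul hconta)))).continuousOn
    · apply ContinuousOn.mul continuousOn_const
      apply ContinuousOn.add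
      · exact ((continuous_const.mul hconta).sub hconts).continuousOn
      · exact continuousOn_const.mul (Real.continuous_arcsin.comp_continuousOn hwcont)
  -- derivative of F on the interior
  have hderiv : ∀ x ∈ Set.Ioo (-c) c,
      HasDerivAt F (eqDensity t x / (z - x)) x := by
    intro x hx
    obtain ⟨hx1, hx2⟩ := hx
    have hq2 : 0 < c^2 - x^2 := by nlinarith
    set q : ℝ := Real.sqrt (c^2 - x^2) with hqdef
    have hq : 0 < q := Real.sqrt_pos.mpr hq2
    have hqq : q^2 = c^2 - x^2 := Real.sq_sqrt hq2.le
    have hzx : 0 < z - x := by linarith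
    have hinner : HasDerivAt (fun y : ℝ => c^2 - y^2) (-(2*x)) x := by
      simpa using (hasDerivAt_pow 2 x).const_sub (c^2)
    have hsq : HasDerivAt (fun y => Real.sqrt (c^2 - y^2)) (-x/q) x := by
      have h := (Real.hasDerivAt_sqrt hq2.ne').comp x hinner
      rw [← hqdef] at h
      refine h.congr_deriv ?_
      symm
      field_simp
    -- piece A
    have hA : HasDerivAt (fun y => (1/3 : ℝ) * Real.sqrt (c^2 - y^2) ^ 3) (-x*q) x := by
      have h := (hsq.pow 3).const_mul (1/3 : ℝ)
      refine h.congr_deriv ?_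
      symm
      field_simp
      ring
    -- piece B
    have hB : HasDerivAt (fun y => y/2 * Real.sqrt (c^2 - y^2))
        ((1/2) * q + x/2 * (-x/q)) x := ((hasDerivAt_id x).div_const 2).mul hsq
    -- piece C: arcsin(x/c)
    have hxc1 : x/c ≠ -1 := by
      intro h; rw [div_eq_iff hc.ne'] at h; nlinarith
    have hxc2 : x/c ≠ 1 := by
      intro h; rw [div_eq_iff hc.ne'] at h; nlinarith
    have harc : HasDerivAt (fun y => Real.arcsin (y/c)) (1/q) x := by
      have h := (Real.hasDerivAt_arcsin hxc1 hxc2).comp x ((hasDerivAt_id x).div_const c)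
      refine h.congr_deriv ?_
      symm
      rw [show 1 - (x/c)^2 = (q/c)^2 by
        field_simp; linear_combination -hqq]
      rw [Real.sqrt_sq (by positivity)]
      field_simp
    -- piece D: arcsin(w)
    have hden0 : c*(z-x) ≠ 0 := by positivity
    have hwnum : HasDerivAt (fun y : ℝ => c^2 - z*y) (-z) x := by
      simpa using ((hasDerivAt_id x).const_mul z).const_sub (c^2)
    have hwden : HasDerivAt (fun y : ℝ => c*(z-y)) (-c) x := by
      simpa using ((hasDerivAt_id x).const_sub z).const_mul c
    have hw : HasDerivAt (fun y => (c^2 - z*y)/(c*(z-y)))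
        ((-z*(c*(z-x)) - (c^2-z*x)*(-c))/(c*(z-x))^2) x := hwnum.div hwden hden0
    have h1w : 1 - ((c^2 - z*x)/(c*(z-x)))^2 = (s*q/(c*(z-x)))^2 := by
      have hne : ((c*(z-x))^2) ≠ 0 := pow_ne_zero 2 hden0
      rw [show (s*q/(c*(z-x)))^2 = s^2*q^2/((c*(z-x))^2) by rw [div_pow, mul_pow]]
      rw [eq_div_iff hne, sub_mul, one_mul, div_pow, div_mul_cancel₀ _ hne, hs2, hqq]
      ring
    have hwlt : ((c^2 - z*x)/(c*(z-x)))^2 < 1 := by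
      have hpos : 0 < (s*q/(c*(z-x)))^2 := by positivity
      linarith [h1w]
    have hwne1 : (c^2 - z*x)/(c*(z-x)) ≠ 1 := by
      intro h; rw [h] at hwlt; norm_num at hwlt
    have hwne1' : (c^2 - z*x)/(c*(z-x)) ≠ -1 := by
      intro h; rw [h] at hwlt; norm_num at hwlt
    have harcw : HasDerivAt (fun y => s * Real.arcsin ((c^2 - z*y)/(c*(z-y))))
        (-(s^2)/((z-x)*q)) x := by
      have h := ((Real.hasDerivAt_arcsin hwne1' hwne1).comp x hw).const_mul s
      refine h.congr_deriv ?_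
      symm
      rw [h1w, Real.sqrt_sq (by positivity)]
      rw [show (-z*(c*(z-x)) - (c^2-z*x)*(-c))/(c*(z-x))^2 = -(s^2)/(c*(z-x)^2) * ((z^2-c^2)/s^2) by
        rw [hs2]; field_simp; ring]
      rw [← hs2]
      field_simp
    -- assemble
    have hbig := ((hA.sub ((hB.add (harc.const_mul (c^2/2))).const_mul z)).add
      ((((harc.const_mul z).sub hsq).add harcw).const_mul (z^2 - D))).const_mul K
    refine hbig.congr_deriv ?_
    symm
    show eqDensity t x / (z - x) = _
    unfold eqDensity
    rw [← hcdef, ← hDdef, ← hqdef, ← hK]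
    have hc2x : c^2 = q^2 + x^2 := by linarith
    rw [hs2, hc2x]
    field_simp
    ring
  -- integrability
  have hint : IntervalIntegrable (fun x => eqDensity t x / (z - x)) volume (-c) c := by
    apply ContinuousOn.intervalIntegrable
    apply ContinuousOn.div
    · have : Continuous (eqDensity t) := by unfold eqDensity; fun_prop
      exact this.continuousOn
    · fun_prop
    · intro x hx
      rw [Set.uIcc_of_le hab] at hx
      have : x < z := lt_of_le_of_lt hx.2 hz
      intro h; rw [sub_eq_zero] at h; linarith
  have key := intervalIntegral.integral_eq_sub_of_hasDeriv_right_of_le hab hcontF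
    (fun x hx => (hderiv x hx).hasDerivWithinAt) hint
  rw [key]
  have hzcne : z - c ≠ 0 := by intro h; rw [sub_eq_zero] at h; exact hz.ne' h
  have e1 : Real.sqrt (c^2 - c^2) = 0 := by rw [show c^2 - c^2 = 0 by ring, Real.sqrt_zero]
  have e1' : Real.sqrt (c^2 - (-c)^2) = 0 := by rw [show c^2 - (-c)^2 = 0 by ring, Real.sqrt_zero]
  have hFc : F c = K * (- z * (c^2/2 * (Real.pi/2))
      + (z^2 - D) * (z * (Real.pi/2) + s * (-(Real.pi/2)))) := by
    simp only [hF]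
    rw [e1, show (c^2 - z*c)/(c*(z-c)) = -1 by field_simp; ring, div_self hc.ne',
      Real.arcsin_one, Real.arcsin_neg_one]
    ring
  have hFmc : F (-c) = K * (- z * (c^2/2 * (-(Real.pi/2)))
      + (z^2 - D) * (z * (-(Real.pi/2)) + s * (Real.pi/2))) := by
    simp only [hF]
    rw [e1', show (c^2 - z*(-c))/(c*(z-(-c))) = 1 by rw [div_eq_one_iff_eq (mul_pos hc (by linarith)).ne']; ring,
      show (-c)/c = -1 by field_simp, Real.arcsin_one, Real.arcsin_neg_one]
    ring
  have hdiff : F c - F (-c) = t/2 * (-(z*c^2)/2 + (z^2-D)*(z-s)) := by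
    rw [hFc, hFmc, hK]
    field_simp
    ring
  rw [hdiff]
  linear_combination (-(z/2)) * hid
end

section
/- For every x ∈ (−√8, √8), the principal value integral lim_{ε→0⁺} [ ∫_{−√8}^{x−ε} (8 + 4y² − y⁴)/(2π·√(8 − y²)·(x − y)) dy + ∫_{x+ε}^{√8} (8 + 4y² − y⁴)/(2π·√(8 − y²)·(x − y)) dy ] exists and equals x³/2. -/
open MeasureTheory Filter

namespace Stmt9

open Set Real

noncomputable def ww (y : ℝ) : ℝ := Real.sqrt (8 - y ^ 2)
noncomputable def ss (x : ℝ) : ℝ := Real.sqrt (8 - x ^ 2)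
noncomputable def Dd (x y : ℝ) : ℝ := 8 - x * y + ss x * ww y
noncomputable def Pp (x : ℝ) : ℝ := 8 + 4 * x ^ 2 - x ^ 4
noncomputable def Rr (x y : ℝ) : ℝ :=
  ww y * (4 + x ^ 2 + x * y / 2) - (8 - y ^ 2) * ww y / 3 - x ^ 3 * Real.arcsin (y / Real.sqrt 8)
noncomputable def G (x y : ℝ) : ℝ :=
  (2 * Real.pi)⁻¹ * (Pp x * (ss x)⁻¹ * (Real.log (Dd x y) - Real.log (x - y)) - Rr x y)
noncomputable def f (x y : ℝ) : ℝ :=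
  (8 + 4 * y ^ 2 - y ^ 4) / (2 * Real.pi * Real.sqrt (8 - y ^ 2) * (x - y))

lemma sqrt8_sq : (Real.sqrt 8) ^ 2 = 8 := Real.sq_sqrt (by norm_num)
lemma sqrt8_pos : (0:ℝ) < Real.sqrt 8 := Real.sqrt_pos.mpr (by norm_num)

lemma sq_lt8 {y : ℝ} (hy : y ∈ Set.Ioo (-Real.sqrt 8) (Real.sqrt 8)) : y ^ 2 < 8 := by
  have h1 : 0 < Real.sqrt 8 - y := by linarith [hy.2]
  have h2 : 0 < Real.sqrt 8 + y := by linarith [hy.1]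
  nlinarith [mul_pos h1 h2, sqrt8_sq]

lemma ww_sq {y : ℝ} (h : y ^ 2 ≤ 8) : (ww y) ^ 2 = 8 - y ^ 2 :=
  Real.sq_sqrt (by linarith)

lemma ww_pos {y : ℝ} (h : y ^ 2 < 8) : 0 < ww y := Real.sqrt_pos.mpr (by linarith)

lemma ww_nonneg (y : ℝ) : 0 ≤ ww y := Real.sqrt_nonneg _

lemma continuous_ww : Continuous ww := by
  unfold ww; fun_prop

lemma continuous_Dd (x : ℝ) : Continuous (Dd x) := by
  unfold Dd; have := continuous_ww; fun_prop

lemma continuous_Rr (x : ℝ) : Continuous (Rr x) := by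
  unfold Rr; have := continuous_ww; have := Real.continuous_arcsin; fun_prop

lemma Dd_pos {x y : ℝ} (hx : x ∈ Set.Ioo (-Real.sqrt 8) (Real.sqrt 8))
    (hy : y ∈ Set.Icc (-Real.sqrt 8) (Real.sqrt 8)) : 0 < Dd x y := by
  have h1 : x * y < 8 := by
    have hx2 : x ^ 2 < 8 := sq_lt8 hx
    have hy2 : y ^ 2 ≤ 8 := by nlinarith [hy.1, hy.2, sqrt8_sq]
    nlinarith
  have := mul_nonneg (Real.sqrt_nonneg (8 - x ^ 2)) (ww_nonneg y)
  unfold Dd ss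
  linarith

lemma continuousAt_G {x y : ℝ} (hx : x ∈ Set.Ioo (-Real.sqrt 8) (Real.sqrt 8))
    (hy : y ∈ Set.Icc (-Real.sqrt 8) (Real.sqrt 8)) (hxy : x - y ≠ 0) :
    ContinuousAt (G x) y := by
  have hD := Dd_pos hx hy
  have h1 : ContinuousAt (fun y => Real.log (Dd x y)) y :=
    ((continuous_Dd x).continuousAt).log hD.ne'
  have h2 : ContinuousAt (fun y => Real.log (x - y)) y :=
    ((continuous_const.sub continuous_id).continuousAt).log hxy
  have h3 : ContinuousAt (Rr x) y := (continuous_Rr x).continuousAt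
  unfold G
  exact continuousAt_const.mul (((continuousAt_const.mul (h1.sub h2))).sub h3)

lemma alg_R (x y w : ℝ) (hw0 : 0 < w) (hw2 : w ^ 2 = 8 - y ^ 2) :
    (y + x) * (4 - x ^ 2 - y ^ 2) / w =
      -y / w * (4 + x ^ 2 + x * y / 2) + w * (x / 2) -
        (-(2 * y) * w + (8 - y ^ 2) * (-y / w)) / 3 - x ^ 3 * w⁻¹ := by
  field_simp
  linear_combination (-(3*x + 4*y)) * hw2

lemma alg_main (x y w s p : ℝ) (hw0 : 0 < w) (hs0 : 0 < s) (hp : p ≠ 0)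
    (hxy : x - y ≠ 0) (hD : 8 - x * y + s * w ≠ 0)
    (hw2 : w ^ 2 = 8 - y ^ 2) (hs2 : s ^ 2 = 8 - x ^ 2) :
    (8 + 4 * y ^ 2 - y ^ 4) / (2 * p * w * (x - y)) =
      (2 * p)⁻¹ * ((8 + 4 * x ^ 2 - x ^ 4) * s⁻¹ *
        ((-x + s * (-y / w)) / (8 - x * y + s * w) - -1 / (x - y)) -
        (y + x) * (4 - x ^ 2 - y ^ 2) / w) := by
  have hD' : 8 - y * x + w * s ≠ 0 := by convert hD using 1; ring
  field_simp
  linear_combination ((-4)*x^2*s + (-8)*s + x^4*s) * hw2 + ((8)*w + (4)*x^2*w + (-1)*x^4*w) * hs2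

lemma hasDerivAt_G {x y : ℝ} (hx : x ∈ Set.Ioo (-Real.sqrt 8) (Real.sqrt 8))
    (hy : y ∈ Set.Ioo (-Real.sqrt 8) (Real.sqrt 8)) (hxy : x - y ≠ 0) :
    HasDerivAt (G x) (f x y) y := by
  have hy2 : y ^ 2 < 8 := sq_lt8 hy
  have hx2 : x ^ 2 < 8 := sq_lt8 hx
  have hw0 : 0 < ww y := ww_pos hy2
  have hw2 : (ww y) ^ 2 = 8 - y ^ 2 := ww_sq hy2.le
  have hs0 : 0 < ss x := Real.sqrt_pos.mpr (by linarith)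
  have hs2 : (ss x) ^ 2 = 8 - x ^ 2 := Real.sq_sqrt (by linarith)
  have hD0 : 0 < Dd x y := Dd_pos hx (Set.mem_Icc_of_Ioo hy)
  have dwy : HasDerivAt ww (-y / ww y) y := by
    have h : HasDerivAt (fun t : ℝ => 8 - t ^ 2) (-(2 * y)) y := by
      simpa using (hasDerivAt_pow 2 y).const_sub 8
    have h2 := (Real.hasDerivAt_sqrt (by nlinarith : (8 - y ^ 2) ≠ 0)).comp y h
    refine h2.congr_deriv ?_
    unfold ww
    field_simp
  have dD : HasDerivAt (Dd x) (-x + ss x * (-y / ww y)) y := by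
    have d1 : HasDerivAt (fun t : ℝ => 8 - x * t) (-x) y := by
      simpa using ((hasDerivAt_id y).const_mul x).const_sub 8
    exact d1.add (dwy.const_mul (ss x))
  have dlogD : HasDerivAt (fun t => Real.log (Dd x t))
      ((-x + ss x * (-y / ww y)) / Dd x y) y := dD.log hD0.ne'
  have dlogxy : HasDerivAt (fun t => Real.log (x - t)) (-1 / (x - y)) y := by
    have h : HasDerivAt (fun t : ℝ => x - t) (-1) y := by
      simpa using (hasDerivAt_id y).const_sub x
    simpa using h.log hxy
  have darcsin : HasDerivAt (fun t => Real.arcsin (t / Real.sqrt 8)) ((ww y)⁻¹) y := by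
    have h8 := sqrt8_pos
    have hlt : y / Real.sqrt 8 < 1 := (div_lt_one h8).2 hy.2
    have hgt : -1 < y / Real.sqrt 8 := by
      rw [lt_div_iff₀ h8]; nlinarith [hy.1]
    have hd : HasDerivAt (fun t : ℝ => t / Real.sqrt 8) (1 / Real.sqrt 8) y := by
      simpa using (hasDerivAt_id y).div_const (Real.sqrt 8)
    have h2 := (Real.hasDerivAt_arcsin hgt.ne' hlt.ne).comp y hd
    refine h2.congr_deriv ?_
    have e1 : 1 - (y / Real.sqrt 8) ^ 2 = (8 - y ^ 2) / 8 := by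
      rw [div_pow, sqrt8_sq]; ring
    rw [e1, Real.sqrt_div (by linarith) 8]
    rw [show Real.sqrt (8 - y ^ 2) = ww y from rfl]
    field_simp
  have dR : HasDerivAt (Rr x) ((y + x) * (4 - x ^ 2 - y ^ 2) / ww y) y := by
    have i1 : HasDerivAt (fun t : ℝ => 4 + x ^ 2 + x * t / 2) (x / 2) y := by
      simpa using (((hasDerivAt_id y).const_mul x).div_const 2).const_add (4 + x ^ 2)
    have p1 := dwy.mul i1
    have i2 : HasDerivAt (fun t : ℝ => 8 - t ^ 2) (-(2 * y)) y := by
      simpa using (hasDerivAt_pow 2 y).const_sub 8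
    have p2 := (i2.mul dwy).div_const 3
    have p3 := darcsin.const_mul (x ^ 3)
    have h2 := (p1.sub p2).sub p3
    refine h2.congr_deriv ?_
    exact (alg_R x y (ww y) hw0 hw2).symm
  have hcomb := (((dlogD.sub dlogxy).const_mul (Pp x * (ss x)⁻¹)).sub dR).const_mul
      (2 * Real.pi)⁻¹
  have h3 : HasDerivAt (G x)
      ((2 * Real.pi)⁻¹ * (Pp x * (ss x)⁻¹ *
        ((-x + ss x * (-y / ww y)) / Dd x y - -1 / (x - y)) -
        (y + x) * (4 - x ^ 2 - y ^ 2) / ww y)) y := hcomb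
  convert h3 using 1
  unfold f Pp Dd
  rw [show Real.sqrt (8 - y ^ 2) = ww y from rfl]
  exact alg_main x y (ww y) (ss x) Real.pi hw0 hs0 Real.pi_ne_zero hxy
    (Dd_pos hx (Set.mem_Icc_of_Ioo hy)).ne' hw2 hs2

lemma intInt_inv_sqrt :
    IntervalIntegrable (fun y : ℝ => (Real.sqrt (8 - y ^ 2))⁻¹) volume
      (-Real.sqrt 8) (Real.sqrt 8) := by
  have h8 := sqrt8_pos
  have hmeas : Measurable (fun y : ℝ => (Real.sqrt (8 - y ^ 2))⁻¹) :=
    (Continuous.measurable (by fun_prop)).inv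
  have key : IntervalIntegrable (fun y : ℝ => (Real.sqrt (8 - y ^ 2))⁻¹) volume
      (-Real.sqrt 8) 0 := by
    have hg : IntervalIntegrable
        (fun y : ℝ => (Real.sqrt (Real.sqrt 8))⁻¹ * ((y + Real.sqrt 8) ^ (-(1/2) : ℝ)))
        volume (-Real.sqrt 8) 0 := by
      have h := (intervalIntegral.intervalIntegrable_rpow'
        (a := 0) (b := Real.sqrt 8) (r := -(1/2)) (by norm_num)).comp_add_right (Real.sqrt 8)
      simpa using h.const_mul (Real.sqrt (Real.sqrt 8))⁻¹
    apply hg.mono_fun' hmeas.aestronglyMeasurable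
    filter_upwards [MeasureTheory.ae_restrict_mem measurableSet_uIoc] with y hy
    rw [Set.uIoc_of_le (by linarith : -Real.sqrt 8 ≤ (0:ℝ))] at hy
    obtain ⟨hy1, hy2⟩ := hy
    have hpos : 0 < y + Real.sqrt 8 := by linarith
    have hfac : 8 - y ^ 2 = (Real.sqrt 8 - y) * (Real.sqrt 8 + y) := by
      nlinarith [sqrt8_sq]
    have hterm : (Real.sqrt (Real.sqrt 8 + y))⁻¹ = (y + Real.sqrt 8) ^ (-(1/2) : ℝ) := by
      rw [Real.rpow_neg hpos.le, ← Real.sqrt_eq_rpow, add_comm]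
    rw [Real.norm_eq_abs, abs_of_nonneg (inv_nonneg.2 (Real.sqrt_nonneg _)), hfac,
      Real.sqrt_mul (by linarith : (0:ℝ) ≤ Real.sqrt 8 - y), mul_inv, ← hterm]
    have h1 : (Real.sqrt (Real.sqrt 8 - y))⁻¹ ≤ (Real.sqrt (Real.sqrt 8))⁻¹ := by
      apply inv_anti₀ (Real.sqrt_pos.2 h8)
      exact Real.sqrt_le_sqrt (by linarith)
    exact mul_le_mul_of_nonneg_right h1 (inv_nonneg.2 (Real.sqrt_nonneg _))
  have key2 : IntervalIntegrable (fun y : ℝ => (Real.sqrt (8 - y ^ 2))⁻¹) volume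
      0 (Real.sqrt 8) := by
    have h := (IntervalIntegrable.iff_comp_neg (by simp)).mp key
    simp only [neg_sq, neg_neg, neg_zero] at h
    exact h.symm
  exact key.trans key2

lemma intInt_f {x : ℝ} (hx : x ∈ Set.Ioo (-Real.sqrt 8) (Real.sqrt 8)) {c d ε : ℝ}
    (hε : 0 < ε) (hcd : c ≤ d) (hc : -Real.sqrt 8 ≤ c) (hd : d ≤ Real.sqrt 8)
    (hsep : ∀ y ∈ Set.Ioc c d, ε ≤ |x - y|) :
    IntervalIntegrable (f x) volume c d := by
  have hπ := Real.pi_pos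
  have hg : IntervalIntegrable
      (fun y : ℝ => (104 / (2 * Real.pi * ε)) * (Real.sqrt (8 - y ^ 2))⁻¹) volume c d := by
    apply IntervalIntegrable.const_mul
    apply IntervalIntegrable.mono_set intInt_inv_sqrt
    rw [Set.uIcc_of_le hcd, Set.uIcc_of_le (by linarith [sqrt8_pos] : -Real.sqrt 8 ≤ Real.sqrt 8)]
    exact Set.Icc_subset_Icc hc hd
  have hfm : Measurable (f x) := by
    unfold f
    exact (Continuous.measurable (by fun_prop)).div (Continuous.measurable (by fun_prop))
  apply hg.mono_fun' hfm.aestronglyMeasurable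
  filter_upwards [MeasureTheory.ae_restrict_mem measurableSet_uIoc] with y hy
  rw [Set.uIoc_of_le hcd] at hy
  have h1 : -Real.sqrt 8 < y := lt_of_le_of_lt hc hy.1
  have h2 : y ≤ Real.sqrt 8 := le_trans hy.2 hd
  have hy2 : y ^ 2 ≤ 8 := by nlinarith [sqrt8_sq]
  have hsep' := hsep y hy
  by_cases h0 : Real.sqrt (8 - y ^ 2) = 0
  · simp [f, h0]
  · have hw0 : 0 < Real.sqrt (8 - y ^ 2) :=
      lt_of_le_of_ne (Real.sqrt_nonneg _) (Ne.symm h0)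
    have habs : 0 < |x - y| := lt_of_lt_of_le hε hsep'
    have hnum : |8 + 4 * y ^ 2 - y ^ 4| ≤ 104 := by
      rw [abs_le]; constructor <;> nlinarith
    have heq : ‖f x y‖ =
        |8 + 4 * y ^ 2 - y ^ 4| / (2 * Real.pi * Real.sqrt (8 - y ^ 2) * |x - y|) := by
      unfold f
      rw [Real.norm_eq_abs, abs_div, abs_mul, abs_mul,
        abs_of_pos (by positivity : (0:ℝ) < 2 * Real.pi), abs_of_pos hw0]
    rw [heq]
    have hrhs : 104 / (2 * Real.pi * ε) * (Real.sqrt (8 - y ^ 2))⁻¹ =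
        104 / (2 * Real.pi * Real.sqrt (8 - y ^ 2) * ε) := by
      field_simp
    rw [hrhs]
    gcongr

end Stmt9

/-- For `x ∈ (−√8, √8)`, the principal value of
`∫ (8 + 4y² − y⁴)/(2π√(8 − y²)(x − y)) dy` over `(−√8, √8)` exists and equals `x³/2`. -/
theorem stmt9 (x : ℝ) (hx : x ∈ Set.Ioo (-Real.sqrt 8) (Real.sqrt 8)) :
    Tendsto (fun ε : ℝ =>
        (∫ y in (-Real.sqrt 8)..(x - ε),
          (8 + 4 * y ^ 2 - y ^ 4) / (2 * Real.pi * Real.sqrt (8 - y ^ 2) * (x - y)))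
        + ∫ y in (x + ε)..(Real.sqrt 8),
          (8 + 4 * y ^ 2 - y ^ 4) / (2 * Real.pi * Real.sqrt (8 - y ^ 2) * (x - y)))
      (nhdsWithin 0 (Set.Ioi 0)) (nhds (x ^ 3 / 2)) := by
  obtain ⟨hx1, hx2⟩ := hx
  have hx' : x ∈ Set.Ioo (-Real.sqrt 8) (Real.sqrt 8) := ⟨hx1, hx2⟩
  have h8 := Stmt9.sqrt8_pos
  have hx2' : x ^ 2 < 8 := Stmt9.sq_lt8 hx'
  have hs0 : 0 < Stmt9.ss x := Real.sqrt_pos.mpr (by linarith)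
  have hs2 : (Stmt9.ss x) ^ 2 = 8 - x ^ 2 := Real.sq_sqrt (by linarith)
  have hπ := Real.pi_pos
  -- endpoint values
  have hwa : Stmt9.ww (Real.sqrt 8) = 0 := by
    unfold Stmt9.ww; rw [Stmt9.sqrt8_sq, sub_self, Real.sqrt_zero]
  have hwa' : Stmt9.ww (-Real.sqrt 8) = 0 := by
    unfold Stmt9.ww
    rw [neg_sq, Stmt9.sqrt8_sq, sub_self, Real.sqrt_zero]
  have hRa : Stmt9.Rr x (Real.sqrt 8) = -(x ^ 3) * (Real.pi / 2) := by
    unfold Stmt9.Rr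
    rw [hwa, div_self h8.ne', Real.arcsin_one]
    ring
  have hRa' : Stmt9.Rr x (-Real.sqrt 8) = x ^ 3 * (Real.pi / 2) := by
    unfold Stmt9.Rr
    rw [hwa', neg_div, div_self h8.ne', Real.arcsin_neg, Real.arcsin_one]
    ring
  have hDa : Stmt9.Dd x (Real.sqrt 8) = Real.sqrt 8 * (Real.sqrt 8 - x) := by
    unfold Stmt9.Dd
    rw [hwa, mul_zero, add_zero]
    linear_combination -Stmt9.sqrt8_sq
  have hDa' : Stmt9.Dd x (-Real.sqrt 8) = Real.sqrt 8 * (Real.sqrt 8 + x) := by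
    unfold Stmt9.Dd
    rw [hwa', mul_zero, add_zero]
    linear_combination -Stmt9.sqrt8_sq
  have hlogA : Real.log (Stmt9.Dd x (Real.sqrt 8)) - Real.log (x - Real.sqrt 8)
      = Real.log (Real.sqrt 8) := by
    rw [hDa, Real.log_mul h8.ne' (by linarith : (0:ℝ) < Real.sqrt 8 - x).ne',
      show x - Real.sqrt 8 = -(Real.sqrt 8 - x) by ring, Real.log_neg_eq_log]
    ring
  have hlogA' : Real.log (Stmt9.Dd x (-Real.sqrt 8)) - Real.log (x - -Real.sqrt 8)
      = Real.log (Real.sqrt 8) := by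
    rw [hDa', Real.log_mul h8.ne' (by linarith : (0:ℝ) < Real.sqrt 8 + x).ne',
      show x - -Real.sqrt 8 = Real.sqrt 8 + x by ring]
    ring
  have hA : Stmt9.G x (Real.sqrt 8) - Stmt9.G x (-Real.sqrt 8) = x ^ 3 / 2 := by
    unfold Stmt9.G
    rw [hlogA, hlogA', hRa, hRa']
    field_simp
    ring
  -- the symmetric difference tends to 0
  have hDx : 0 < Stmt9.Dd x x := Stmt9.Dd_pos hx' ⟨by linarith, by linarith⟩
  have hB : Tendsto (fun ε => Stmt9.G x (x - ε) - Stmt9.G x (x + ε))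
      (nhdsWithin 0 (Set.Ioi 0)) (nhds 0) := by
    set φ : ℝ → ℝ := fun ε => (2 * Real.pi)⁻¹ *
      (Stmt9.Pp x * (Stmt9.ss x)⁻¹ *
        (Real.log (Stmt9.Dd x (x - ε)) - Real.log (Stmt9.Dd x (x + ε))) -
        (Stmt9.Rr x (x - ε) - Stmt9.Rr x (x + ε))) with hφ
    have hc1 : Continuous fun ε : ℝ => x - ε := continuous_const.sub continuous_id
    have hc2 : Continuous fun ε : ℝ => x + ε := continuous_const.add continuous_id
    have hcont : ContinuousAt φ 0 := by
      apply ContinuousAt.mul continuousAt_const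
      apply ContinuousAt.sub
      · apply ContinuousAt.mul continuousAt_const
        apply ContinuousAt.sub
        · apply ContinuousAt.log
          · exact ((Stmt9.continuous_Dd x).comp hc1).continuousAt
          · simpa using hDx.ne'
        · apply ContinuousAt.log
          · exact ((Stmt9.continuous_Dd x).comp hc2).continuousAt
          · simpa using hDx.ne'
      · exact (((Stmt9.continuous_Rr x).comp hc1).continuousAt).sub
          (((Stmt9.continuous_Rr x).comp hc2).continuousAt)
    have hφ0 : φ 0 = 0 := by simp [hφ]
    have htφ : Tendsto φ (nhdsWithin 0 (Set.Ioi 0)) (nhds 0) := by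
      have htmp : Tendsto φ (nhdsWithin 0 (Set.Ioi 0)) (nhds (φ 0)) :=
        hcont.tendsto.mono_left nhdsWithin_le_nhds
      rwa [hφ0] at htmp
    apply htφ.congr'
    filter_upwards [self_mem_nhdsWithin] with ε (hε : ε ∈ Set.Ioi (0:ℝ))
    have hε0 : (0:ℝ) < ε := hε
    unfold Stmt9.G
    rw [hφ]
    have e1 : x - (x - ε) = ε := by ring
    have e2 : x - (x + ε) = -ε := by ring
    rw [e1, e2, Real.log_neg_eq_log]
    ring
  -- eventual equality with G-differences via FTC
  have hδ : (0:ℝ) < min (x + Real.sqrt 8) (Real.sqrt 8 - x) :=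
    lt_min (by linarith) (by linarith)
  have hEq : ∀ᶠ ε in nhdsWithin (0:ℝ) (Set.Ioi 0),
      ((∫ y in (-Real.sqrt 8)..(x - ε),
          (8 + 4 * y ^ 2 - y ^ 4) / (2 * Real.pi * Real.sqrt (8 - y ^ 2) * (x - y)))
        + ∫ y in (x + ε)..(Real.sqrt 8),
          (8 + 4 * y ^ 2 - y ^ 4) / (2 * Real.pi * Real.sqrt (8 - y ^ 2) * (x - y)))
      = (Stmt9.G x (x - ε) - Stmt9.G x (x + ε))
        + (Stmt9.G x (Real.sqrt 8) - Stmt9.G x (-Real.sqrt 8)) := by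
    filter_upwards [Ioo_mem_nhdsGT hδ] with ε hε
    have hε0 : 0 < ε := hε.1
    have h1 : -Real.sqrt 8 < x - ε := by
      have := lt_of_lt_of_le hε.2 (min_le_left _ _); linarith
    have h2 : x + ε < Real.sqrt 8 := by
      have := lt_of_lt_of_le hε.2 (min_le_right _ _); linarith
    have hL : (∫ y in (-Real.sqrt 8)..(x - ε),
        (8 + 4 * y ^ 2 - y ^ 4) / (2 * Real.pi * Real.sqrt (8 - y ^ 2) * (x - y)))
        = Stmt9.G x (x - ε) - Stmt9.G x (-Real.sqrt 8) := by
      apply intervalIntegral.integral_eq_sub_of_hasDeriv_right_of_le h1.le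
      · intro y hy
        refine (Stmt9.continuousAt_G hx' ⟨hy.1, by linarith [hy.2]⟩ ?_).continuousWithinAt
        have : y ≤ x - ε := hy.2
        intro h; rw [sub_eq_zero] at h; linarith
      · intro y hy
        refine (Stmt9.hasDerivAt_G hx' ⟨hy.1, by linarith [hy.2]⟩ ?_).hasDerivWithinAt
        have : y < x - ε := hy.2
        intro h; rw [sub_eq_zero] at h; linarith
      · have := Stmt9.intInt_f hx' hε0 h1.le le_rfl (by linarith)
          (fun y hy => by
            rw [abs_of_pos (by linarith [hy.2] : (0:ℝ) < x - y)]
            linarith [hy.2])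
        exact this
    have hR : (∫ y in (x + ε)..(Real.sqrt 8),
        (8 + 4 * y ^ 2 - y ^ 4) / (2 * Real.pi * Real.sqrt (8 - y ^ 2) * (x - y)))
        = Stmt9.G x (Real.sqrt 8) - Stmt9.G x (x + ε) := by
      apply intervalIntegral.integral_eq_sub_of_hasDeriv_right_of_le h2.le
      · intro y hy
        refine (Stmt9.continuousAt_G hx' ⟨by linarith [hy.1], hy.2⟩ ?_).continuousWithinAt
        have : x + ε ≤ y := hy.1
        intro h; rw [sub_eq_zero] at h; linarith
      · intro y hy
        refine (Stmt9.hasDerivAt_G hx' ⟨by linarith [hy.1], hy.2⟩ ?_).hasDerivWithinAt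
        have : x + ε < y := hy.1
        intro h; rw [sub_eq_zero] at h; linarith
      · have := Stmt9.intInt_f hx' hε0 h2.le (by linarith) le_rfl
          (fun y hy => by
            rw [abs_of_neg (by linarith [hy.1] : x - y < 0)]
            linarith [hy.1])
        exact this
    rw [hL, hR]
    ring
  have hfinal : Tendsto (fun ε => (Stmt9.G x (x - ε) - Stmt9.G x (x + ε))
      + (Stmt9.G x (Real.sqrt 8) - Stmt9.G x (-Real.sqrt 8)))
      (nhdsWithin 0 (Set.Ioi 0))
      (nhds (0 + (Stmt9.G x (Real.sqrt 8) - Stmt9.G x (-Real.sqrt 8)))) :=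
    hB.add tendsto_const_nhds
  have hconc := hfinal.congr' (hEq.mono fun _ h => h.symm)
  rw [zero_add, hA] at hconc
  exact hconc
end

section
/- For every x ∈ (−√8, √8), the principal value integral lim_{ε→0⁺} [ ∫_{−√8}^{x−ε} (8 − y²)^{3/2}/(24π·(x − y)) dy + ∫_{x+ε}^{√8} (8 − y²)^{3/2}/(24π·(x − y)) dy ] exists and equals x/2 − x³/24. -/
open MeasureTheory Filter Set Real


lemma rpow32 (a : ℝ) (ha : 0 ≤ a) : a ^ ((3:ℝ)/2) = Real.sqrt a ^ 3 := by
  rcases eq_or_lt_of_le ha with h | h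
  · rw [← h, Real.zero_rpow (by norm_num), Real.sqrt_zero]
    norm_num
  · have : Real.sqrt a ^ 3 = a * Real.sqrt a := by
      rw [pow_succ, Real.sq_sqrt ha]
    rw [this, show ((3:ℝ)/2) = 1 + 1/2 by norm_num, Real.rpow_add h,
      Real.rpow_one, Real.sqrt_eq_rpow]

lemma hda_sqrt8 (y : ℝ) (h : y^2 < 8) :
    HasDerivAt (fun y => Real.sqrt (8 - y^2)) (-y / Real.sqrt (8 - y^2)) y := by
  have h0 : (0:ℝ) < 8 - y^2 := by linarith
  have hs : Real.sqrt (8 - y^2) ≠ 0 := by positivity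
  have hin : HasDerivAt (fun y : ℝ => 8 - y^2) (-(2*y)) y := by
    simpa using ((hasDerivAt_pow 2 y).const_sub 8)
  have := (Real.hasDerivAt_sqrt (ne_of_gt h0)).comp y hin
  refine this.congr_deriv (Eq.symm ?_)
  field_simp

lemma hda_arcsin8 (y : ℝ) (h : y^2 < 8) :
    HasDerivAt (fun y => Real.arcsin (y / Real.sqrt 8)) (1 / Real.sqrt (8 - y^2)) y := by
  have hq : (0:ℝ) < Real.sqrt 8 := Real.sqrt_pos.2 (by norm_num)
  have hq2 : Real.sqrt 8 ^ 2 = 8 := Real.sq_sqrt (by norm_num)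
  have h0 : (0:ℝ) < 8 - y^2 := by linarith
  have hs : (0:ℝ) < Real.sqrt (8 - y^2) := Real.sqrt_pos.2 h0
  have h1 : y / Real.sqrt 8 ≠ -1 := by
    intro h'
    have hy : y = -Real.sqrt 8 := by
      field_simp at h'; linarith
    rw [hy] at h; nlinarith
  have h2 : y / Real.sqrt 8 ≠ 1 := by
    intro h'
    have hy : y = Real.sqrt 8 := by
      field_simp at h'; linarith
    rw [hy] at h; nlinarith
  have hin : HasDerivAt (fun y : ℝ => y / Real.sqrt 8) (1 / Real.sqrt 8) y := by
    simpa using (hasDerivAt_id y).div_const (Real.sqrt 8)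
  have := (Real.hasDerivAt_arcsin h1 h2).comp y hin
  refine this.congr_deriv (Eq.symm ?_)
  have e1 : 1 - (y / Real.sqrt 8)^2 = (8 - y^2) / 8 := by
    rw [div_pow, hq2]; ring
  rw [e1, Real.sqrt_div h0.le]
  rw [show Real.sqrt (8:ℝ) = Real.sqrt 8 from rfl]
  field_simp


lemma hda_cube (y : ℝ) (h : y^2 < 8) :
    HasDerivAt (fun y => Real.sqrt (8 - y^2)^3 / 3) (-(y * Real.sqrt (8 - y^2))) y := by
  have h0 : (0:ℝ) < 8 - y^2 := by linarith
  have hs : Real.sqrt (8 - y^2) ≠ 0 := by positivity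
  have hs2 : Real.sqrt (8 - y^2) ^ 2 = 8 - y^2 := Real.sq_sqrt h0.le
  have := ((hda_sqrt8 y h).pow 3).div_const 3
  refine this.congr_deriv (Eq.symm ?_)
  field_simp
  linear_combination 0 * hs2

lemma hda_ys (y : ℝ) (h : y^2 < 8) :
    HasDerivAt (fun y => y * Real.sqrt (8 - y^2) / 2 + 4 * Real.arcsin (y / Real.sqrt 8))
      (Real.sqrt (8 - y^2)) y := by
  have h0 : (0:ℝ) < 8 - y^2 := by linarith
  have hs : Real.sqrt (8 - y^2) ≠ 0 := by positivity
  have hs2 : Real.sqrt (8 - y^2) ^ 2 = 8 - y^2 := Real.sq_sqrt h0.le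
  have h1 := ((hasDerivAt_id y).mul (hda_sqrt8 y h)).div_const 2
  have h2 := (hda_arcsin8 y h).const_mul 4
  refine (h1.add h2).congr_deriv (Eq.symm ?_)
  field_simp
  simp only [id_eq]
  linear_combination hs2

lemma hda_L (x y : ℝ) (hx2 : x^2 < 8) (hy2 : y^2 < 8) (hxy : x ≠ y)
    (hA : 0 < 8 - x*y + Real.sqrt (8 - x^2) * Real.sqrt (8 - y^2)) :
    HasDerivAt (fun y => Real.log (8 - x*y + Real.sqrt (8 - x^2) * Real.sqrt (8 - y^2))
        - Real.log (x - y))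
      (Real.sqrt (8 - x^2) / ((x - y) * Real.sqrt (8 - y^2))) y := by
  have h0 : (0:ℝ) < 8 - y^2 := by linarith
  have h0x : (0:ℝ) < 8 - x^2 := by linarith
  have hs : Real.sqrt (8 - y^2) ≠ 0 := by positivity
  have hr : Real.sqrt (8 - x^2) ≠ 0 := by positivity
  have hs2 : Real.sqrt (8 - y^2) ^ 2 = 8 - y^2 := Real.sq_sqrt h0.le
  have hr2 : Real.sqrt (8 - x^2) ^ 2 = 8 - x^2 := Real.sq_sqrt h0x.le
  have hxy' : x - y ≠ 0 := sub_ne_zero.2 hxy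
  have hin : HasDerivAt (fun y : ℝ => 8 - x*y + Real.sqrt (8 - x^2) * Real.sqrt (8 - y^2))
      (-x + Real.sqrt (8 - x^2) * (-y / Real.sqrt (8 - y^2))) y := by
    have ha : HasDerivAt (fun y : ℝ => 8 - x*y) (-x) y := by
      simpa using ((hasDerivAt_id y).const_mul x).const_sub 8
    exact ha.add ((hda_sqrt8 y hy2).const_mul _)
  have hl1 : HasDerivAt (fun y => Real.log (8 - x*y + Real.sqrt (8 - x^2) * Real.sqrt (8 - y^2)))
      ((-x + Real.sqrt (8 - x^2) * (-y / Real.sqrt (8 - y^2))) /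
        (8 - x*y + Real.sqrt (8 - x^2) * Real.sqrt (8 - y^2))) y := hin.log (ne_of_gt hA)
  have hl2 : HasDerivAt (fun y => Real.log (x - y)) ((-1) / (x - y)) y := by
    have : HasDerivAt (fun y : ℝ => x - y) (-1) y := by
      simpa using (hasDerivAt_id y).const_sub x
    exact this.log hxy'
  refine (hl1.sub hl2).congr_deriv (Eq.symm ?_)
  set r := Real.sqrt (8 - x^2)
  set s := Real.sqrt (8 - y^2)
  field_simp
  linear_combination s * hr2 - r * hs2


noncomputable def Fb (x y : ℝ) : ℝ :=
  (8 - x^2) * ((8 - x^2) / Real.sqrt (8 - x^2) *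
      (Real.log (8 - x*y + Real.sqrt (8 - x^2) * Real.sqrt (8 - y^2)) - Real.log (x - y))
    + x * Real.arcsin (y / Real.sqrt 8) - Real.sqrt (8 - y^2))
  + x * (y * Real.sqrt (8 - y^2) / 2 + 4 * Real.arcsin (y / Real.sqrt 8))
  - Real.sqrt (8 - y^2)^3 / 3

lemma posA (x y : ℝ) (hx2 : x^2 < 8) (hy2 : y^2 ≤ 8) :
    0 < 8 - x*y + Real.sqrt (8 - x^2) * Real.sqrt (8 - y^2) := by
  have h1 : 0 ≤ Real.sqrt (8 - x^2) * Real.sqrt (8 - y^2) := by positivity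
  nlinarith [sq_nonneg (x - y), sq_nonneg (x + y)]

lemma hda_Fb (x y : ℝ) (hx2 : x^2 < 8) (hy2 : y^2 < 8) (hxy : x ≠ y) :
    HasDerivAt (Fb x) ((8 - y^2) ^ ((3:ℝ)/2) / (x - y)) y := by
  have h0 : (0:ℝ) < 8 - y^2 := by linarith
  have h0x : (0:ℝ) < 8 - x^2 := by linarith
  have hs : Real.sqrt (8 - y^2) ≠ 0 := by positivity
  have hr : Real.sqrt (8 - x^2) ≠ 0 := by positivity
  have hs2 : Real.sqrt (8 - y^2) ^ 2 = 8 - y^2 := Real.sq_sqrt h0.le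
  have hr2 : Real.sqrt (8 - x^2) ^ 2 = 8 - x^2 := Real.sq_sqrt h0x.le
  have hxy' : x - y ≠ 0 := sub_ne_zero.2 hxy
  have hA := posA x y hx2 hy2.le
  have h1 := ((hda_L x y hx2 hy2 hxy hA).const_mul ((8 - x^2) / Real.sqrt (8 - x^2)))
  have h2 := (hda_arcsin8 y hy2).const_mul x
  have h3 := hda_sqrt8 y hy2
  have h4 := (hda_ys y hy2).const_mul x
  have h5 := hda_cube y hy2
  have hsum := ((((h1.add h2).sub h3).const_mul (8 - x^2)).add h4).sub h5
  refine hsum.congr_deriv (Eq.symm ?_)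
  rw [rpow32 _ h0.le]
  set r := Real.sqrt (8 - x^2)
  set s := Real.sqrt (8 - y^2)
  rw [show (8 - x^2) / r * (r / ((x - y) * s)) = (8-x^2)/((x-y)*s) from by field_simp]
  field_simp
  linear_combination ((x - y)*s^2*(s^2 + 8 - x^2) + (y - x)*s^4 + ((1 - x*y^2 - x^2*y + x^3 + y^3) + (y - x)*(8 - y^2))*s^2 + ((64*x - 8*x*y^2 - x^2 + 8*x^2*y - x^2*y^3 - 8*x^3 + x^3*y^2 - 64*y + y^2 + 8*y^3) + (1 - x*y^2 - x^2*y + x^3 + y^3)*(8 - y^2) + (y - x)*(8 - y^2)^2)) * hs2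



noncomputable def Pb (x y : ℝ) : ℝ :=
  (8 - x^2) * ((8 - x^2) / Real.sqrt (8 - x^2) *
      Real.log (8 - x*y + Real.sqrt (8 - x^2) * Real.sqrt (8 - y^2))
    + x * Real.arcsin (y / Real.sqrt 8) - Real.sqrt (8 - y^2))
  + x * (y * Real.sqrt (8 - y^2) / 2 + 4 * Real.arcsin (y / Real.sqrt 8))
  - Real.sqrt (8 - y^2)^3 / 3

lemma Fb_eq_Pb (x y : ℝ) :
    Fb x y = Pb x y - (8 - x^2) * ((8 - x^2) / Real.sqrt (8 - x^2)) * Real.log (x - y) := by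
  unfold Fb Pb; ring


lemma contAt_Pb (x y : ℝ) (hx2 : x^2 < 8) (hy2 : y^2 ≤ 8) : ContinuousAt (Pb x) y := by
  have hA := posA x y hx2 hy2
  have hc1 : ContinuousAt (fun y : ℝ => 8 - x*y + Real.sqrt (8-x^2) * Real.sqrt (8-y^2)) y := by
    fun_prop
  have hl1 : ContinuousAt
      (fun y : ℝ => Real.log (8 - x*y + Real.sqrt (8-x^2) * Real.sqrt (8-y^2))) y :=
    hc1.log (ne_of_gt hA)
  have ha : ContinuousAt (fun y : ℝ => Real.arcsin (y / Real.sqrt 8)) y := by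
    exact Real.continuous_arcsin.continuousAt.comp (by fun_prop)
  have hsq : ContinuousAt (fun y : ℝ => Real.sqrt (8 - y^2)) y := by fun_prop
  unfold Pb
  exact ((((hl1.const_mul _).add (ha.const_mul x)).sub hsq).const_mul _).add
    ((((continuousAt_id.mul hsq).div_const 2).add (ha.const_mul 4)).const_mul x)
    |>.sub ((hsq.pow 3).div_const 3)

lemma contAt_Fb (x y : ℝ) (hx2 : x^2 < 8) (hy2 : y^2 ≤ 8) (hxy : x ≠ y) :
    ContinuousAt (Fb x) y := by
  have hl2 : ContinuousAt (fun y : ℝ => Real.log (x - y)) y :=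
    ContinuousAt.log (by fun_prop) (sub_ne_zero.2 hxy)
  have := (contAt_Pb x y hx2 hy2).sub ((hl2.const_mul ((8 - x^2) * ((8 - x^2) / Real.sqrt (8 - x^2)))))
  refine ContinuousAt.congr this ?_
  filter_upwards with z
  rw [Fb_eq_Pb]
  rfl

lemma Fb_diff (x : ℝ) (hx2 : x^2 < 8) :
    Fb x (Real.sqrt 8) - Fb x (-Real.sqrt 8) = Real.pi * (12*x - x^3) := by
  set q := Real.sqrt 8 with hqdef
  have hq2 : q^2 = 8 := Real.sq_sqrt (by norm_num)
  have hq0 : 0 < q := Real.sqrt_pos.2 (by norm_num)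
  have hxq : x < q := by nlinarith
  have hxq' : -q < x := by nlinarith
  have e0 : Real.sqrt (8 - q^2) = 0 := by rw [hq2]; simp
  have e0' : Real.sqrt (8 - (-q)^2) = 0 := by rw [neg_sq, hq2]; simp
  have ea : Real.arcsin (q / q) = Real.pi / 2 := by
    rw [div_self hq0.ne', Real.arcsin_one]
  have ea' : Real.arcsin (-q / q) = -(Real.pi / 2) := by
    rw [neg_div, div_self hq0.ne', Real.arcsin_neg, Real.arcsin_one]
  have l1 : Real.log (8 - x*q + Real.sqrt (8-x^2) * Real.sqrt (8 - q^2))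
      = Real.log q + Real.log (q - x) := by
    rw [e0, mul_zero, add_zero, show 8 - x*q = q*(q-x) by linear_combination -hq2,
      Real.log_mul hq0.ne' (by linarith)]
  have l2 : Real.log (x - q) = Real.log (q - x) := by
    rw [show x - q = -(q-x) by ring, Real.log_neg_eq_log]
  have l3 : Real.log (8 - x*(-q) + Real.sqrt (8-x^2) * Real.sqrt (8 - (-q)^2))
      = Real.log q + Real.log (q + x) := by
    rw [e0', mul_zero, add_zero, show 8 - x*(-q) = q*(q+x) by linear_combination -hq2,
      Real.log_mul hq0.ne' (by linarith)]
  have l4 : Real.log (x - -q) = Real.log (q + x) := by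
    rw [show x - -q = q + x by ring]
  unfold Fb
  rw [← hqdef, l1, l2, l3, l4, e0, e0', ea, ea']
  ring




/-- For `x ∈ (−√8, √8)`, the principal value of
`∫ (8 − y²)^{3/2}/(24π(x − y)) dy` over `(−√8, √8)` exists and equals `x/2 − x³/24`. -/
theorem stmt10 (x : ℝ) (hx : x ∈ Set.Ioo (-Real.sqrt 8) (Real.sqrt 8)) :
    Tendsto (fun ε : ℝ =>
        (∫ y in (-Real.sqrt 8)..(x - ε),
          (8 - y ^ 2) ^ ((3 : ℝ) / 2) / (24 * Real.pi * (x - y)))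
        + ∫ y in (x + ε)..(Real.sqrt 8),
          (8 - y ^ 2) ^ ((3 : ℝ) / 2) / (24 * Real.pi * (x - y)))
      (nhdsWithin 0 (Set.Ioi 0)) (nhds (x / 2 - x ^ 3 / 24)) := by
  obtain ⟨hx1, hx2'⟩ := hx
  have hq2 : Real.sqrt 8 ^ 2 = 8 := Real.sq_sqrt (by norm_num)
  have hq0 : (0:ℝ) < Real.sqrt 8 := Real.sqrt_pos.2 (by norm_num)
  have hx2 : x^2 < 8 := by nlinarith
  have hpi : (24 * Real.pi) ≠ 0 := by positivity
  have cnum : Continuous (fun y : ℝ => (8 - y^2) ^ ((3:ℝ)/2)) := by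
    have h1 : Continuous (fun a : ℝ => a ^ ((3:ℝ)/2)) :=
      continuous_iff_continuousAt.2 fun a => Real.continuousAt_rpow_const a _ (Or.inr (by norm_num))
    exact h1.comp (by continuity)
  set δ : ℝ := min (Real.sqrt 8 - x) (x + Real.sqrt 8) with hδdef
  have hδ0 : 0 < δ := lt_min (by linarith) (by linarith)
  -- key identity for small ε
  have key : ∀ ε ∈ Ioo (0:ℝ) δ,
      ((∫ y in (-Real.sqrt 8)..(x - ε),
          (8 - y ^ 2) ^ ((3 : ℝ) / 2) / (24 * Real.pi * (x - y)))
        + ∫ y in (x + ε)..(Real.sqrt 8),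
          (8 - y ^ 2) ^ ((3 : ℝ) / 2) / (24 * Real.pi * (x - y)))
      = (Fb x (Real.sqrt 8) - Fb x (-Real.sqrt 8)) / (24 * Real.pi)
        - (Fb x (x + ε) - Fb x (x - ε)) / (24 * Real.pi) := by
    intro ε hε
    obtain ⟨hε0, hεδ⟩ := hε
    have hδ1 : δ ≤ Real.sqrt 8 - x := min_le_left _ _
    have hδ2 : δ ≤ x + Real.sqrt 8 := min_le_right _ _
    have hb1 : -Real.sqrt 8 ≤ x - ε := by linarith
    have hb2 : x + ε ≤ Real.sqrt 8 := by linarith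
    have hsq8 : ∀ y : ℝ, -Real.sqrt 8 ≤ y → y ≤ Real.sqrt 8 → y^2 ≤ 8 := by
      intro y h1 h2; nlinarith
    have hderiv : ∀ y : ℝ, y^2 < 8 → x ≠ y →
        HasDerivAt (fun y => Fb x y / (24 * Real.pi))
          ((8 - y ^ 2) ^ ((3 : ℝ) / 2) / (24 * Real.pi * (x - y))) y := by
      intro y hy2 hxy
      have := (hda_Fb x y hx2 hy2 hxy).div_const (24 * Real.pi)
      refine this.congr_deriv (Eq.symm ?_)
      rw [div_div, mul_comm (x - y) (24 * Real.pi)]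
    -- first integral
    have I1 : (∫ y in (-Real.sqrt 8)..(x - ε),
          (8 - y ^ 2) ^ ((3 : ℝ) / 2) / (24 * Real.pi * (x - y)))
        = Fb x (x - ε) / (24 * Real.pi) - Fb x (-Real.sqrt 8) / (24 * Real.pi) := by
      apply intervalIntegral.integral_eq_sub_of_hasDeriv_right_of_le (f := fun y => Fb x y / (24*Real.pi)) hb1
      · intro y hy
        refine ((contAt_Fb x y hx2 (hsq8 y hy.1 (by linarith [hy.2])) ?_).div_const _).continuousWithinAt
        intro h; rw [← h] at hy; linarith [hy.2]
      · intro y hy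
        refine (hderiv y ?_ ?_).hasDerivWithinAt
        · have := hsq8 y hy.1.le (by linarith [hy.2])
          nlinarith [hy.1, hy.2, hq2]
        · intro h; rw [← h] at hy; linarith [hy.2]
      · apply ContinuousOn.intervalIntegrable
        rw [uIcc_of_le hb1]
        apply ContinuousOn.div cnum.continuousOn (by fun_prop)
        intro y hy
        have : x - y > 0 := by linarith [hy.2]
        positivity
    -- second integral
    have I2 : (∫ y in (x + ε)..(Real.sqrt 8),
          (8 - y ^ 2) ^ ((3 : ℝ) / 2) / (24 * Real.pi * (x - y)))
        = Fb x (Real.sqrt 8) / (24 * Real.pi) - Fb x (x + ε) / (24 * Real.pi) := by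
      apply intervalIntegral.integral_eq_sub_of_hasDeriv_right_of_le (f := fun y => Fb x y / (24*Real.pi)) hb2
      · intro y hy
        refine ((contAt_Fb x y hx2 (hsq8 y (by linarith [hy.1]) hy.2) ?_).div_const _).continuousWithinAt
        intro h; rw [← h] at hy; linarith [hy.1]
      · intro y hy
        refine (hderiv y ?_ ?_).hasDerivWithinAt
        · nlinarith [hy.1, hy.2, hq2]
        · intro h; rw [← h] at hy; linarith [hy.1]
      · apply ContinuousOn.intervalIntegrable
        rw [uIcc_of_le hb2]
        apply ContinuousOn.div cnum.continuousOn (by fun_prop)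
        intro y hy
        have h1 : x - y < 0 := by linarith [hy.1]
        have : 24 * Real.pi * (x - y) < 0 := by
          apply mul_neg_of_pos_of_neg (by positivity) h1
        exact ne_of_lt this
    rw [I1, I2]
    ring
  -- the limit of the boundary term
  have hlim0 : Tendsto (fun ε : ℝ => (Fb x (x + ε) - Fb x (x - ε)) / (24 * Real.pi))
      (nhdsWithin 0 (Set.Ioi 0)) (nhds 0) := by
    have hPcont : ContinuousAt (Pb x) x := contAt_Pb x x hx2 hx2.le
    have t0 : Tendsto (fun ε : ℝ => x + ε) (nhds 0) (nhds x) := by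
      simpa using (tendsto_const_nhds.add tendsto_id : Tendsto (fun ε : ℝ => x + ε) (nhds 0) (nhds (x + 0)))
    have t0' : Tendsto (fun ε : ℝ => x - ε) (nhds 0) (nhds x) := by
      simpa using (tendsto_const_nhds.sub tendsto_id : Tendsto (fun ε : ℝ => x - ε) (nhds 0) (nhds (x - 0)))
    have t1 : Tendsto (fun ε : ℝ => (Pb x (x + ε) - Pb x (x - ε)) / (24 * Real.pi))
        (nhds 0) (nhds 0) := by
      have := ((hPcont.tendsto.comp t0).sub (hPcont.tendsto.comp t0')).div_const (24 * Real.pi)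
      simpa using this
    refine Tendsto.congr' ?_ (t1.mono_left nhdsWithin_le_nhds)
    filter_upwards [self_mem_nhdsWithin] with ε (hε : ε ∈ Ioi (0:ℝ))
    have hε0 : ε ≠ 0 := ne_of_gt hε
    rw [Fb_eq_Pb x (x + ε), Fb_eq_Pb x (x - ε),
      show x - (x + ε) = -ε by ring, show x - (x - ε) = ε by ring, Real.log_neg_eq_log]
    ring
  -- assemble
  have hIoo : Ioo (0:ℝ) δ ∈ nhdsWithin (0:ℝ) (Set.Ioi 0) :=
    Ioo_mem_nhdsGT_of_mem ⟨le_refl 0, hδ0⟩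
  have hfinal := (tendsto_const_nhds
      (x := (Fb x (Real.sqrt 8) - Fb x (-Real.sqrt 8)) / (24 * Real.pi))
      (f := nhdsWithin (0:ℝ) (Set.Ioi 0))).sub hlim0
  have hval : (Fb x (Real.sqrt 8) - Fb x (-Real.sqrt 8)) / (24 * Real.pi) - 0
      = x / 2 - x ^ 3 / 24 := by
    rw [sub_zero, Fb_diff x hx2]
    field_simp
    ring
  rw [hval] at hfinal
  exact Tendsto.congr' (eventuallyEq_of_mem hIoo fun ε hε => (key ε hε).symm) hfinal
end
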